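/- For all n ≥ 1, the following identity holds in ℚ(q)[x]: C_n(qx+1 | q) = Σ_{j=0}^{n-1} f(n+j, n-1-j | q^{-1}) · q^{jn + n(n+1)/2 - (j+1)(j+2)/2} · (x choose j)_q. -/

import Mathlib

open Polynomial Finset

/-- The indeterminate `q`, as an element of the field of rational functions `ℚ(q)`. -/
noncomputable def qq : RatFunc ℚ := RatFunc.X

/-- The Carlitz–Riordan `q`-ballot numbers `f(n,k|q) ∈ ℤ[q]`:
`f(0,0|q) = 1`, `f(n,k|q) = 0` for `k > n`, and
`f(n,k|q) = q·f(n,k-1|q) + q^k·f(n-1,k|q)` for `n ≥ k ≥ 0`, `(n,k) ≠ (0,0)`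
(with `f(n,-1|q) = 0`, so `f(n,0|q) = f(n-1,0|q)`). -/
noncomputable def fq : ℕ → ℕ → Polynomial ℤ
  | 0, 0 => 1
  | 0, _ + 1 => 0
  | n + 1, 0 => fq n 0
  | n + 1, k + 1 =>
    if k + 1 ≤ n + 1 then
      Polynomial.X * fq (n + 1) k + Polynomial.X ^ (k + 1) * fq n (k + 1)
    else 0
  termination_by n k => (n, k)

/-- The `q`-integer `[k]_q = (q^k - 1)/(q - 1)` in `ℚ(q)`. -/
noncomputable def qint (k : ℕ) : RatFunc ℚ := (qq ^ k - 1) / (qq - 1)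

/-- The `q`-binomial polynomial `(x choose j)_q = x(x-[1]_q)⋯(x-[j-1]_q)/([1]_q⋯[j]_q)`
in `ℚ(q)[x]`. -/
noncomputable def qbinom (j : ℕ) : Polynomial (RatFunc ℚ) :=
  Polynomial.C (∏ i ∈ Finset.range j, qint (i + 1))⁻¹ *
    ∏ i ∈ Finset.range j, (Polynomial.X - Polynomial.C (qint i))





lemma hq0 : qq ≠ 0 := RatFunc.X_ne_zero

lemma hqpow : ∀ m : ℕ, 1 ≤ m → qq ^ m ≠ 1 := by
  intro m hm h
  have : (algebraMap (Polynomial ℚ) (RatFunc ℚ)) (Polynomial.X ^ m) =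
      (algebraMap (Polynomial ℚ) (RatFunc ℚ)) 1 := by
    simpa [qq, RatFunc.algebraMap_X] using h
  have h2 : (Polynomial.X : Polynomial ℚ) ^ m = 1 := RatFunc.algebraMap_injective ℚ this
  have := congrArg (Polynomial.eval 0) h2
  simp [zero_pow (by omega : m ≠ 0)] at this

lemma hq1 : qq - 1 ≠ 0 := by
  intro h
  apply hqpow 1 le_rfl
  rw [pow_one, ← sub_eq_zero, h]

lemma qint_zero : qint 0 = 0 := by simp [qint]

lemma qint_one : qint 1 = 1 := by
  simp [qint, pow_one]; exact hq1

lemma qint_ne (m : ℕ) : qint (m + 1) ≠ 0 := by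
  rw [qint, div_ne_zero_iff]
  refine ⟨fun h => hqpow (m+1) (by omega) ?_, hq1⟩
  rwa [sub_eq_zero] at h

lemma qint_succ (m : ℕ) : qint (m + 1) = qq * qint m + 1 := by
  have h1 := hq1
  simp only [qint]
  field_simp
  ring

lemma prodqint_ne (m : ℕ) : ∏ i ∈ Finset.range m, qint (i + 1) ≠ 0 :=
  Finset.prod_ne_zero_iff.2 fun i _ => qint_ne i

noncomputable def Fh (a b : ℕ) : RatFunc ℚ := Polynomial.aeval qq⁻¹ (fq a b)

lemma fq_zero : ∀ a b : ℕ, a < b → fq a b = 0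
  | 0, b + 1, _ => by rw [fq]
  | a + 1, b + 1, h => by
      rw [fq, if_neg (by omega)]

lemma Fh_zero (a b : ℕ) (h : a < b) : Fh a b = 0 := by simp [Fh, fq_zero a b h]

lemma Fh_rec0 (a : ℕ) : Fh (a + 1) 0 = Fh a 0 := by rw [Fh, Fh, fq]

lemma Fh_rec (a b : ℕ) (h : b + 1 ≤ a + 1) :
    Fh (a + 1) (b + 1) = qq⁻¹ * Fh (a + 1) b + (qq⁻¹) ^ (b + 1) * Fh a (b + 1) := by
  rw [Fh, Fh, Fh, fq, if_pos h]
  simp [map_add, map_mul, map_pow]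

lemma Fh_one_zero : Fh 1 0 = 1 := by rw [Fh_rec0]; simp [Fh, fq]

def Tn (m : ℕ) : ℕ := m * (m + 1) / 2

lemma Tn_succ (m : ℕ) : Tn (m + 1) = Tn m + (m + 1) := by
  show (m+1)*(m+2)/2 = m*(m+1)/2 + (m+1)
  have h : (m+1)*(m+2) = m*(m+1) + (m+1)*2 := by ring
  rw [h, Nat.add_mul_div_right _ _ (by norm_num)]

lemma Tn_mono {j n : ℕ} (h : j ≤ n) : Tn j ≤ Tn n :=
  Nat.div_le_div_right (Nat.mul_le_mul h (by omega))

lemma qph (a b c d : ℕ) (h : a + d = c + b) :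
    qq ^ a * (qq ^ b)⁻¹ = qq ^ c * (qq ^ d)⁻¹ := by
  have hb : qq ^ b ≠ 0 := pow_ne_zero _ hq0
  have hd : qq ^ d ≠ 0 := pow_ne_zero _ hq0
  field_simp
  rw [← pow_add, ← pow_add, h]
  ring


noncomputable def Pp (m : ℕ) : Polynomial (RatFunc ℚ) :=
  Polynomial.C (∏ i ∈ Finset.range m, qint (i + 1))⁻¹ *
    ∏ i ∈ Finset.range m, (Polynomial.X - Polynomial.C (qint (i + 1)))

noncomputable def sig : Polynomial (RatFunc ℚ) :=
  Polynomial.C qq⁻¹ * Polynomial.X - Polynomial.C qq⁻¹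

noncomputable def Ap : Polynomial (RatFunc ℚ) :=
  Polynomial.C qq * Polynomial.X + 1

lemma prod_comp' (s : Finset ℕ) (f : ℕ → Polynomial (RatFunc ℚ)) (g : Polynomial (RatFunc ℚ)) :
    (∏ i ∈ s, f i).comp g = ∏ i ∈ s, (f i).comp g := by
  simp only [Polynomial.comp]
  exact Polynomial.eval₂_finset_prod _ _ _ _

lemma qbinom_zero : qbinom 0 = 1 := by simp [qbinom]

lemma Pp_zero : Pp 0 = 1 := by simp [Pp]

lemma qbinom_succ_eq (j : ℕ) : qbinom (j + 1) =
    Polynomial.C (∏ i ∈ Finset.range (j + 1), qint (i + 1))⁻¹ *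
      ((∏ i ∈ Finset.range j, (Polynomial.X - Polynomial.C (qint (i + 1)))) * Polynomial.X) := by
  rw [qbinom, Finset.prod_range_succ' (fun i => Polynomial.X - Polynomial.C (qint i))]
  simp [qint_zero]

-- comp with sig of linear factor
lemma lin_comp_sig (a : RatFunc ℚ) :
    (Polynomial.X - Polynomial.C a).comp sig =
      Polynomial.C qq⁻¹ * (Polynomial.X - Polynomial.C (qq * a + 1)) := by
  have h0 := hq0
  have hs : qq⁻¹ * (qq * a + 1) = a + qq⁻¹ := by field_simp
  simp only [sig, Polynomial.sub_comp, Polynomial.X_comp, Polynomial.C_comp]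
  rw [mul_sub, ← Polynomial.C_mul, hs, Polynomial.C_add]
  ring

lemma qbinom_comp_sig (j : ℕ) :
    (qbinom j).comp sig = Polynomial.C ((qq⁻¹) ^ j) * Pp j := by
  rw [qbinom, Polynomial.mul_comp, Polynomial.C_comp, prod_comp']
  have : ∀ i ∈ Finset.range j, (Polynomial.X - Polynomial.C (qint i)).comp sig =
      Polynomial.C qq⁻¹ * (Polynomial.X - Polynomial.C (qint (i + 1))) := by
    intro i _
    rw [lin_comp_sig, ← qint_succ]
  rw [Finset.prod_congr rfl this, Finset.prod_mul_distrib, Finset.prod_const,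
    Finset.card_range, ← Polynomial.C_pow, Pp]
  ring

lemma lin_comp_Ap (a : RatFunc ℚ) :
    (Polynomial.X - Polynomial.C (qq * a + 1)).comp Ap =
      Polynomial.C qq * (Polynomial.X - Polynomial.C a) := by
  simp only [Ap, Polynomial.sub_comp, Polynomial.X_comp, Polynomial.C_comp]
  simp only [Polynomial.C_add, Polynomial.C_mul, Polynomial.C_1]
  ring

lemma DD_split (j : ℕ) :
    (∏ i ∈ Finset.range (j + 1), qint (i + 1)) =
      (∏ i ∈ Finset.range j, qint (i + 1)) * qint (j + 1) := Finset.prod_range_succ _ _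

lemma Dinv_qint (j : ℕ) :
    (∏ i ∈ Finset.range (j + 1), qint (i + 1))⁻¹ * qint (j + 1) =
      (∏ i ∈ Finset.range j, qint (i + 1))⁻¹ := by
  rw [DD_split, mul_inv, mul_assoc, inv_mul_cancel₀ (qint_ne j), mul_one]

-- P3
lemma Pp_succ (j : ℕ) : Pp (j + 1) = qbinom (j + 1) - Pp j := by
  rw [Pp, Finset.prod_range_succ (fun i => Polynomial.X - Polynomial.C (qint (i+1))), qbinom_succ_eq, Pp]
  have h : Polynomial.C (∏ i ∈ Finset.range (j+1), qint (i+1))⁻¹ * Polynomial.C (qint (j+1)) =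
      Polynomial.C (∏ i ∈ Finset.range j, qint (i+1))⁻¹ := by
    rw [← Polynomial.C_mul, Dinv_qint]
  linear_combination (-(∏ i ∈ Finset.range j, (Polynomial.X - Polynomial.C (qint (i+1))))) * h

lemma qint_mul (m : ℕ) : (qq - 1) * qint m = qq ^ m - 1 := by
  have h1 := hq1
  rw [qint]
  field_simp

lemma one_sub_rpow (m : ℕ) : (1 : RatFunc ℚ) - (qq⁻¹) ^ (m + 1) =
    (qq - 1) * (qq⁻¹) ^ (m + 1) * qint (m + 1) := by
  have h1 : (qq⁻¹) ^ (m + 1) * qq ^ (m + 1) = 1 := by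
    rw [← mul_pow, inv_mul_cancel₀ hq0, one_pow]
  calc (1 : RatFunc ℚ) - (qq⁻¹) ^ (m + 1)
      = (qq⁻¹) ^ (m + 1) * (qq ^ (m + 1) - 1) := by rw [mul_sub, h1]; ring
    _ = _ := by rw [← qint_mul (m + 1)]; ring

-- P1
lemma key_sub (j : ℕ) :
    qbinom (j + 1) - (qbinom (j + 1)).comp sig =
      (1 + Polynomial.C (qq - 1) * Polynomial.X) * (Polynomial.C ((qq⁻¹) ^ (j + 1)) * Pp j) := by
  rw [qbinom_comp_sig, Pp_succ, qbinom_succ_eq, Pp]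
  have hC : (1 - Polynomial.C ((qq⁻¹) ^ (j + 1))) *
        Polynomial.C (∏ i ∈ Finset.range (j + 1), qint (i + 1))⁻¹ =
      Polynomial.C (qq - 1) * Polynomial.C ((qq⁻¹) ^ (j + 1)) *
        Polynomial.C (∏ i ∈ Finset.range j, qint (i + 1))⁻¹ := by
    rw [← Polynomial.C_1, ← Polynomial.C_sub, ← Polynomial.C_mul, ← Polynomial.C_mul,
      ← Polynomial.C_mul, one_sub_rpow, ← Dinv_qint j]
    congr 1
    ring
  linear_combination ((∏ i ∈ Finset.range j, (Polynomial.X - Polynomial.C (qint (i + 1)))) *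
    Polynomial.X) * hC

-- P2
lemma qbinom_comp_Ap (j : ℕ) :
    (qbinom (j + 1)).comp Ap =
      Polynomial.C (qq ^ j) * (Polynomial.C qq * qbinom (j + 1) + qbinom j) := by
  have hB0 : qbinom j = Polynomial.C (∏ i ∈ Finset.range j, qint (i + 1))⁻¹ *
      (∏ i ∈ Finset.range j, (Polynomial.X - Polynomial.C (qint i))) := rfl
  have hD : Polynomial.C (∏ i ∈ Finset.range (j + 1), qint (i + 1))⁻¹ *
      Polynomial.C (qint (j + 1)) = Polynomial.C (∏ i ∈ Finset.range j, qint (i + 1))⁻¹ := by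
    rw [← Polynomial.C_mul, Dinv_qint]
  rw [qbinom, Polynomial.mul_comp, Polynomial.C_comp, prod_comp']
  have h1 : ∀ i ∈ Finset.range j, (Polynomial.X - Polynomial.C (qint (i + 1))).comp Ap
      = Polynomial.C qq * (Polynomial.X - Polynomial.C (qint i)) := by
    intro i _
    rw [qint_succ]; exact lin_comp_Ap _
  have h0 : (Polynomial.X - Polynomial.C (qint 0)).comp Ap = Polynomial.C qq * Polynomial.X + 1 := by
    simp [qint_zero, Ap]
  have hprod : ∏ i ∈ Finset.range (j + 1), ((Polynomial.X - Polynomial.C (qint i)).comp Ap) =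
      ((Polynomial.C qq) ^ j * ∏ i ∈ Finset.range j, (Polynomial.X - Polynomial.C (qint i))) *
        (Polynomial.C qq * Polynomial.X + 1) := by
    rw [Finset.prod_range_succ', Finset.prod_congr rfl h1, Finset.prod_mul_distrib,
      Finset.prod_const, Finset.card_range, h0]
  have hsplit : Polynomial.C qq * Polynomial.X + 1 =
      Polynomial.C qq * (Polynomial.X - Polynomial.C (qint j)) + Polynomial.C (qint (j + 1)) := by
    rw [qint_succ, Polynomial.C_add, Polynomial.C_mul, Polynomial.C_1]; ring
  rw [hprod, hsplit, Finset.prod_range_succ (fun i => Polynomial.X - Polynomial.C (qint i)),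
    hB0, Polynomial.C_pow]
  linear_combination ((Polynomial.C qq) ^ j *
    (∏ i ∈ Finset.range j, (Polynomial.X - Polynomial.C (qint i)))) * hD

-- PB
lemma Pp_eq_sum (m : ℕ) :
    Pp m = ∑ k ∈ Finset.range (m + 1), Polynomial.C ((-1 : RatFunc ℚ) ^ (m - k)) * qbinom k := by
  induction m with
  | zero => simp [Pp_zero, qbinom_zero]
  | succ m ih =>
    rw [Pp_succ, ih,
      Finset.sum_range_succ (fun k => Polynomial.C ((-1 : RatFunc ℚ) ^ (m + 1 - k)) * qbinom k)]
    simp only [Nat.sub_self, pow_zero, Polynomial.C_1, one_mul]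
    have h : ∀ k ∈ Finset.range (m + 1),
        Polynomial.C ((-1 : RatFunc ℚ) ^ (m + 1 - k)) * qbinom k
        = -(Polynomial.C ((-1 : RatFunc ℚ) ^ (m - k)) * qbinom k) := by
      intro k hk
      have hk' : k ≤ m := by simpa [Nat.lt_succ_iff] using hk
      have h2 : m + 1 - k = (m - k) + 1 := by omega
      rw [h2, pow_succ]
      simp only [Polynomial.C_mul, Polynomial.C_neg, Polynomial.C_1]
      ring
    rw [Finset.sum_congr rfl h, Finset.sum_neg_distrib]
    ring

noncomputable def bb : RatFunc ℚ := -qq⁻¹ - (qq⁻¹) ^ 2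

lemma bb_sub_qint (i : ℕ) : bb - qint i = -((qq⁻¹) ^ 2 * qint (i + 2)) := by
  have h2 : qint (i + 2) = qq * (qq * qint i + 1) + 1 := by rw [qint_succ, qint_succ]
  have h0 := hq0
  rw [h2, bb]
  field_simp
  ring

lemma prodShift (j : ℕ) : ∏ i ∈ Finset.range j, qint (i + 2) =
    qint (j + 1) * ∏ i ∈ Finset.range j, qint (i + 1) := by
  induction j with
  | zero => simp [qint_one]
  | succ j ih =>
    rw [Finset.prod_range_succ, ih, Finset.prod_range_succ]
    ring

lemma qbinom_eval_bb (j : ℕ) :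
    (qbinom j).eval bb = (-1 : RatFunc ℚ) ^ j * (qq⁻¹) ^ (2 * j) * qint (j + 1) := by
  rw [qbinom, Polynomial.eval_mul, Polynomial.eval_C, Polynomial.eval_prod]
  have h : ∀ i ∈ Finset.range j,
      Polynomial.eval bb (Polynomial.X - Polynomial.C (qint i)) =
        (-((qq⁻¹) ^ 2)) * qint (i + 2) := by
    intro i _
    simp [bb_sub_qint i]
  rw [Finset.prod_congr rfl h, Finset.prod_mul_distrib, Finset.prod_const, Finset.card_range,
    prodShift]
  have hD := prodqint_ne j
  have hn : (-((qq⁻¹) ^ 2)) ^ j = (-1 : RatFunc ℚ) ^ j * (qq⁻¹) ^ (2 * j) := by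
    rw [neg_pow, ← pow_mul]
  rw [hn, inv_mul_eq_div, div_eq_iff hD]
  ring

-- CONST
lemma const_of_comp (P : Polynomial (RatFunc ℚ)) (h : P.comp sig = P) :
    P = Polynomial.C (P.coeff 0) := by
  by_cases hd : P.natDegree = 0
  · exact Polynomial.eq_C_of_natDegree_eq_zero hd
  · exfalso
    have hinv : (qq⁻¹ : RatFunc ℚ) ≠ 0 := inv_ne_zero hq0
    have hsig : sig = Polynomial.C qq⁻¹ * Polynomial.X + Polynomial.C (-qq⁻¹) := by
      rw [sig, Polynomial.C_neg]; ring
    have hdeg : sig.natDegree = 1 := by rw [hsig]; exact Polynomial.natDegree_linear hinv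
    have hlc : sig.leadingCoeff = qq⁻¹ := by rw [hsig]; exact Polynomial.leadingCoeff_linear hinv
    have h2 := Polynomial.leadingCoeff_comp (p := P) (q := sig) (by rw [hdeg]; norm_num)
    rw [h, hlc] at h2
    have hP0 : P ≠ 0 := fun h0 => hd (by simp [h0])
    have hlcP : P.leadingCoeff ≠ 0 := Polynomial.leadingCoeff_ne_zero.mpr hP0
    have h3 : (qq⁻¹) ^ P.natDegree = 1 := mul_left_cancel₀ hlcP (by rw [← h2, mul_one])
    have h4 : qq ^ P.natDegree = 1 := by
      rw [inv_pow, inv_eq_one] at h3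
      exact h3
    exact hqpow _ (Nat.one_le_iff_ne_zero.mpr hd) h4

noncomputable def gI (n j : ℕ) : RatFunc ℚ :=
  Fh (n + j) (n - 1 - j) * qq ^ (j * n + Tn n) * (qq ^ (Tn (j + 1)))⁻¹

noncomputable def G (n j : ℕ) : RatFunc ℚ := if j < n then gI n j else 0



lemma qcoef (m a b c d e : ℕ) (h : a + e = c + d + b + m) :
    (qq⁻¹) ^ m * (qq ^ a * (qq ^ b)⁻¹) = qq ^ c * (qq ^ d * (qq ^ e)⁻¹) := by
  have h1 : (qq⁻¹) ^ m * (qq ^ a * (qq ^ b)⁻¹) = qq ^ a * (qq ^ (b + m))⁻¹ := by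
    rw [inv_pow, pow_add, mul_inv]; ring
  have h2 : qq ^ c * (qq ^ d * (qq ^ e)⁻¹) = qq ^ (c + d) * (qq ^ e)⁻¹ := by
    rw [pow_add]; ring
  rw [h1, h2]
  exact qph a (b + m) (c + d) e (by omega)

lemma Fh_double (a b : ℕ) (h : b + 2 ≤ a + 1) :
    Fh (a + 2) (b + 2) = (qq⁻¹) ^ 2 * Fh (a + 2) b +
      ((qq⁻¹) ^ (b + 2) + (qq⁻¹) ^ (b + 3)) * Fh (a + 1) (b + 1) +
      (qq⁻¹) ^ (2 * b + 4) * Fh a (b + 2) := by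
  rw [Fh_rec (a + 1) (b + 1) (by omega), Fh_rec (a + 1) b (by omega),
    Fh_rec a (b + 1) (by omega)]
  ring

lemma Fh_double1 (a : ℕ) :
    Fh (a + 2) 1 = (qq⁻¹ + (qq⁻¹) ^ 2) * Fh (a + 1) 0 + (qq⁻¹) ^ 2 * Fh a 1 := by
  have h1 : Fh (a + 2) 1 = qq⁻¹ * Fh (a + 2) 0 + (qq⁻¹) ^ 1 * Fh (a + 1) 1 :=
    Fh_rec (a + 1) 0 (by omega)
  have h2 : Fh (a + 1) 1 = qq⁻¹ * Fh (a + 1) 0 + (qq⁻¹) ^ 1 * Fh a 1 :=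
    Fh_rec a 0 (by omega)
  rw [h1, h2, Fh_rec0]
  ring

lemma REC (n k : ℕ) :
    G (n + 1) (k + 1) = qq ^ (2 * k + 2) * G n k +
      (qq ^ (2 * k + 2) + qq ^ (2 * k + 3)) * G n (k + 1) +
      qq ^ (2 * k + 3) * G n (k + 2) := by
  rcases lt_trichotomy (k + 1) n with hlt | heq | hgt
  · -- k + 1 < n
    rcases Nat.lt_or_ge (k + 2) n with hlt2 | hge2
    · -- k + 3 ≤ n : generic case
      obtain ⟨s, rfl⟩ : ∃ s, n = k + 3 + s := ⟨n - (k + 3), by omega⟩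
      rw [G, if_pos (by omega), G, if_pos (by omega), G, if_pos (by omega), G, if_pos (by omega)]
      rw [gI, gI, gI, gI]
      have e1 : k + 3 + s + 1 + (k + 1) = 2 * k + s + 3 + 2 := by omega
      have e1' : k + 3 + s + 1 - 1 - (k + 1) = s + 2 := by omega
      have e2 : k + 3 + s + k = 2 * k + s + 3 := by omega
      have e2' : k + 3 + s - 1 - k = s + 2 := by omega
      have e3 : k + 3 + s + (k + 1) = 2 * k + s + 3 + 1 := by omega
      have e3' : k + 3 + s - 1 - (k + 1) = s + 1 := by omega
      have e4 : k + 3 + s + (k + 2) = 2 * k + s + 3 + 2 := by omega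
      have e4' : k + 3 + s - 1 - (k + 2) = s := by omega
      rw [e1, e1', e2, e2', e3, e3', e4, e4']
      rw [Fh_double (2 * k + s + 3) s (by omega)]
      generalize Fh (2 * k + s + 3 + 2) s = F1
      generalize Fh (2 * k + s + 3 + 1) (s + 1) = F2
      generalize Fh (2 * k + s + 3) (s + 2) = F3
      have c1 : (qq⁻¹) ^ 2 * (qq ^ ((k + 1) * (k + 3 + s + 1) + Tn (k + 3 + s + 1)) *
            (qq ^ (Tn (k + 1 + 1)))⁻¹) =
          qq ^ (2 * k + 3) * (qq ^ ((k + 2) * (k + 3 + s) + Tn (k + 3 + s)) *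
            (qq ^ (Tn (k + 2 + 1)))⁻¹) :=
        qcoef _ _ _ _ _ _ (by simp only [Tn_succ]; ring)
      have c2 : (qq⁻¹) ^ (s + 2) * (qq ^ ((k + 1) * (k + 3 + s + 1) + Tn (k + 3 + s + 1)) *
            (qq ^ (Tn (k + 1 + 1)))⁻¹) =
          qq ^ (2 * k + 3) * (qq ^ ((k + 1) * (k + 3 + s) + Tn (k + 3 + s)) *
            (qq ^ (Tn (k + 1 + 1)))⁻¹) :=
        qcoef _ _ _ _ _ _ (by simp only [Tn_succ]; ring)
      have c2b : (qq⁻¹) ^ (s + 3) * (qq ^ ((k + 1) * (k + 3 + s + 1) + Tn (k + 3 + s + 1)) *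
            (qq ^ (Tn (k + 1 + 1)))⁻¹) =
          qq ^ (2 * k + 2) * (qq ^ ((k + 1) * (k + 3 + s) + Tn (k + 3 + s)) *
            (qq ^ (Tn (k + 1 + 1)))⁻¹) :=
        qcoef _ _ _ _ _ _ (by simp only [Tn_succ]; ring)
      have c3 : (qq⁻¹) ^ (2 * s + 4) * (qq ^ ((k + 1) * (k + 3 + s + 1) + Tn (k + 3 + s + 1)) *
            (qq ^ (Tn (k + 1 + 1)))⁻¹) =
          qq ^ (2 * k + 2) * (qq ^ (k * (k + 3 + s) + Tn (k + 3 + s)) *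
            (qq ^ (Tn (k + 1)))⁻¹) :=
        qcoef _ _ _ _ _ _ (by simp only [Tn_succ]; ring)
      linear_combination F1 * c1 + F2 * c2 + F2 * c2b + F3 * c3
    · -- k + 2 = n
      obtain rfl : n = k + 2 := by omega
      rw [G, if_pos (by omega), G, if_pos (by omega), G, if_pos (by omega), G, if_neg (by omega)]
      rw [gI, gI, gI]
      have e1 : k + 2 + 1 + (k + 1) = 2 * k + 2 + 2 := by omega
      have e1' : k + 2 + 1 - 1 - (k + 1) = 1 := by omega
      have e2 : k + 2 + k = 2 * k + 2 := by omega
      have e2' : k + 2 - 1 - k = 1 := by omega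
      have e3 : k + 2 + (k + 1) = 2 * k + 2 + 1 := by omega
      have e3' : k + 2 - 1 - (k + 1) = 0 := by omega
      rw [e1, e1', e2, e2', e3, e3']
      rw [Fh_double1 (2 * k + 2)]
      generalize Fh (2 * k + 2 + 1) 0 = F1
      generalize Fh (2 * k + 2) 1 = F2
      have cA : (qq⁻¹) ^ 1 * (qq ^ ((k + 1) * (k + 2 + 1) + Tn (k + 2 + 1)) *
            (qq ^ (Tn (k + 1 + 1)))⁻¹) =
          qq ^ (2 * k + 3) * (qq ^ ((k + 1) * (k + 2) + Tn (k + 2)) *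
            (qq ^ (Tn (k + 1 + 1)))⁻¹) :=
        qcoef _ _ _ _ _ _ (by simp only [Tn_succ]; ring)
      have cB : (qq⁻¹) ^ 2 * (qq ^ ((k + 1) * (k + 2 + 1) + Tn (k + 2 + 1)) *
            (qq ^ (Tn (k + 1 + 1)))⁻¹) =
          qq ^ (2 * k + 2) * (qq ^ ((k + 1) * (k + 2) + Tn (k + 2)) *
            (qq ^ (Tn (k + 1 + 1)))⁻¹) :=
        qcoef _ _ _ _ _ _ (by simp only [Tn_succ]; ring)
      have cC : (qq⁻¹) ^ 2 * (qq ^ ((k + 1) * (k + 2 + 1) + Tn (k + 2 + 1)) *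
            (qq ^ (Tn (k + 1 + 1)))⁻¹) =
          qq ^ (2 * k + 2) * (qq ^ (k * (k + 2) + Tn (k + 2)) *
            (qq ^ (Tn (k + 1)))⁻¹) :=
        qcoef _ _ _ _ _ _ (by simp only [Tn_succ]; ring)
      linear_combination F1 * cA + F1 * cB + F2 * cC
  · -- k + 1 = n
    obtain rfl : n = k + 1 := heq.symm
    rw [G, if_pos (by omega), G, if_pos (by omega), G, if_neg (by omega), G, if_neg (by omega)]
    rw [gI, gI]
    have e1 : k + 1 + 1 - 1 - (k + 1) = 0 := by omega
    have e2 : k + 1 - 1 - k = 0 := by omega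
    rw [e1, e2]
    have e3 : k + 1 + 1 + (k + 1) = k + 1 + k + 1 + 1 := by omega
    rw [e3, Fh_rec0, Fh_rec0]
    generalize Fh (k + 1 + k) 0 = F1
    have c : (qq⁻¹) ^ 0 * (qq ^ ((k + 1) * (k + 1 + 1) + Tn (k + 1 + 1)) *
          (qq ^ (Tn (k + 1 + 1)))⁻¹) =
        qq ^ (2 * k + 2) * (qq ^ (k * (k + 1) + Tn (k + 1)) * (qq ^ (Tn (k + 1)))⁻¹) :=
      qcoef _ _ _ _ _ _ (by simp only [Tn_succ]; ring)
    rw [pow_zero, one_mul] at c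
    linear_combination F1 * c
  · -- n < k + 1
    rw [G, if_neg (by omega), G, if_neg (by omega), G, if_neg (by omega), G, if_neg (by omega)]
    ring

lemma qint_two : qint 2 = qq + 1 := by
  rw [show (2:ℕ) = 1 + 1 from rfl, qint_succ, qint_one, mul_one]

lemma BD0 (n : ℕ) (hn : 1 ≤ n) : gI (n + 1) 0 = qint 2 * G n 0 + qq * G n 1 := by
  have h0 := hq0
  rcases Nat.lt_or_ge n 2 with h1 | h2
  · -- n = 1
    obtain rfl : n = 1 := by omega
    rw [G, if_pos (by omega), G, if_neg (by omega), gI, gI]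
    have e1 : (1:ℕ) + 1 + 0 = 1 + 1 := by omega
    have e2 : (1:ℕ) + 1 - 1 - 0 = 0 + 1 := by omega
    have e4 : (1:ℕ) + 0 = 0 + 1 := by omega
    have e5 : (1:ℕ) - 1 - 0 = 0 := by omega
    rw [e1, e2, e4, e5]
    have hF21 : Fh (1 + 1) (0 + 1) = qq⁻¹ * Fh (1 + 1) 0 + (qq⁻¹) ^ (0 + 1) * Fh 1 (0 + 1) :=
      Fh_rec 1 0 (by omega)
    have hF11 : Fh 1 (0 + 1) = qq⁻¹ * Fh (0 + 1) 0 + (qq⁻¹) ^ (0 + 1) * Fh 0 (0 + 1) :=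
      Fh_rec 0 0 (by omega)
    have hF01 : Fh 0 (0 + 1) = 0 := Fh_zero 0 1 (by omega)
    have hF20 : Fh (1 + 1) 0 = Fh (0 + 1) 0 := Fh_rec0 1
    rw [hF21, hF11, hF01, hF20]
    have hF10 : Fh (0 + 1) 0 = 1 := Fh_one_zero
    rw [hF10, qint_two]
    have hT1 : Tn (0 + 1) = 1 := rfl
    have hT2 : Tn (1 + 1) = 3 := rfl
    rw [hT1, hT2]
    field_simp
    linear_combination qq ^ 2 * inv_mul_cancel₀ h0
  · -- n ≥ 2
    obtain ⟨m, rfl⟩ : ∃ m, n = m + 2 := ⟨n - 2, by omega⟩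
    rw [G, if_pos (by omega), G, if_pos (by omega), gI, gI, gI]
    have e1 : m + 2 + 1 - 1 - 0 = m + 2 := by omega
    have e2 : m + 2 - 1 - 0 = m + 1 := by omega
    have e3 : m + 2 - 1 - 1 = m := by omega
    have e4 : m + 2 + 1 + 0 = m + 1 + 2 := by omega
    have e5 : m + 2 + 0 = m + 2 := by omega
    have e6 : m + 2 + 1 = m + 1 + 2 := by omega
    rw [e1, e2, e3, e4, e5, e6]
    have hda : Fh (m + 1 + 2) (m + 2) = (qq⁻¹) ^ 2 * Fh (m + 1 + 2) m +
        ((qq⁻¹) ^ (m + 2) + (qq⁻¹) ^ (m + 3)) * Fh (m + 1 + 1) (m + 1) +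
        (qq⁻¹) ^ (2 * m + 4) * Fh (m + 1) (m + 2) :=
      Fh_double (m + 1) m (by omega)
    rw [hda, Fh_zero (m + 1) (m + 2) (by omega), mul_zero, add_zero]
    generalize Fh (m + 1 + 2) m = F1
    generalize Fh (m + 1 + 1) (m + 1) = F2
    have c1 : (qq⁻¹) ^ 2 * (qq ^ (0 * (m + 2 + 1) + Tn (m + 2 + 1)) * (qq ^ (Tn (0 + 1)))⁻¹) =
        qq ^ 1 * (qq ^ (1 * (m + 2) + Tn (m + 2)) * (qq ^ (Tn (1 + 1)))⁻¹) :=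
      qcoef _ _ _ _ _ _ (by simp only [Tn_succ]; ring)
    have c2 : (qq⁻¹) ^ (m + 2) * (qq ^ (0 * (m + 2 + 1) + Tn (m + 2 + 1)) *
          (qq ^ (Tn (0 + 1)))⁻¹) =
        qq ^ 1 * (qq ^ (0 * (m + 2) + Tn (m + 2)) * (qq ^ (Tn (0 + 1)))⁻¹) :=
      qcoef _ _ _ _ _ _ (by simp only [Tn_succ]; ring)
    have c3 : (qq⁻¹) ^ (m + 3) * (qq ^ (0 * (m + 2 + 1) + Tn (m + 2 + 1)) *
          (qq ^ (Tn (0 + 1)))⁻¹) =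
        qq ^ (0 * (m + 2) + Tn (m + 2)) * (qq ^ (Tn (0 + 1)))⁻¹ := by
      have h := qcoef (m + 3) (0 * (m + 2 + 1) + Tn (m + 2 + 1)) (Tn (0 + 1)) 0
        (0 * (m + 2) + Tn (m + 2)) (Tn (0 + 1)) (by simp only [Tn_succ]; ring)
      rwa [pow_zero, one_mul] at h
    rw [qint_two, pow_one] at *
    linear_combination F1 * c1 + F2 * c2 + F2 * c3

lemma coeff_eq (n j : ℕ) (h : j < n) :
    Polynomial.aeval qq⁻¹ (fq (n + j) (n - 1 - j)) *
      qq ^ (j * n + n * (n + 1) / 2 - (j + 1) * (j + 2) / 2) = G n j := by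
  rw [G, if_pos h, gI]
  have hle : Tn (j + 1) ≤ j * n + Tn n :=
    le_trans (Tn_mono (by omega : j + 1 ≤ n)) (Nat.le_add_left _ _)
  have he : j * n + n * (n + 1) / 2 - (j + 1) * (j + 2) / 2 = (j * n + Tn n) - Tn (j + 1) := rfl
  rw [he, pow_sub₀ qq hq0 hle, ← mul_assoc]
  rfl

noncomputable def En (n : ℕ) : Polynomial (RatFunc ℚ) :=
  ∑ j ∈ Finset.range n, Polynomial.C (G n j) * qbinom j

lemma sum_comp' (s : Finset ℕ) (f : ℕ → Polynomial (RatFunc ℚ)) (g : Polynomial (RatFunc ℚ)) :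
    (∑ i ∈ s, f i).comp g = ∑ i ∈ s, (f i).comp g := by
  simp only [Polynomial.comp]
  exact Polynomial.eval₂_finset_sum _ _ _ _

lemma abel_sum (N : ℕ) (a : ℕ → RatFunc ℚ) :
    ∑ i ∈ Finset.range N, Polynomial.C (a i) * Pp i =
      ∑ k ∈ Finset.range N,
        Polynomial.C (∑ j ∈ Finset.Ico k N, (-1 : RatFunc ℚ) ^ (j - k) * a j) * qbinom k := by
  induction N with
  | zero => simp
  | succ N ih =>
    rw [Finset.sum_range_succ, ih, Pp_eq_sum]
    have hsplit : ∀ k ∈ Finset.range (N + 1),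
        Polynomial.C (∑ j ∈ Finset.Ico k (N + 1), (-1 : RatFunc ℚ) ^ (j - k) * a j) * qbinom k =
          Polynomial.C (∑ j ∈ Finset.Ico k N, (-1 : RatFunc ℚ) ^ (j - k) * a j) * qbinom k +
          Polynomial.C (a N) * (Polynomial.C ((-1 : RatFunc ℚ) ^ (N - k)) * qbinom k) := by
      intro k hk
      rw [Finset.sum_Ico_succ_top (by simpa [Nat.lt_succ_iff] using hk)]
      rw [Polynomial.C_add, Polynomial.C_mul]
      ring
    rw [Finset.sum_congr rfl hsplit, Finset.sum_add_distrib, ← Finset.mul_sum]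
    rw [Finset.sum_range_succ
      (fun k => Polynomial.C (∑ j ∈ Finset.Ico k N, (-1 : RatFunc ℚ) ^ (j - k) * a j) * qbinom k)]
    simp [Finset.Ico_self]

lemma rpow_mul_qpow (a b c : ℕ) (h : a + c = b) : (qq⁻¹) ^ a * qq ^ b = qq ^ c := by
  rw [inv_pow, ← h, pow_add, inv_mul_cancel_left₀ (pow_ne_zero _ hq0)]

lemma Tk_eq (n : ℕ) : ∀ d k, n ≤ k + d →
    (∑ j ∈ Finset.Ico k n,
      (-1 : RatFunc ℚ) ^ (j - k) * ((qq⁻¹) ^ (j + 1) * G (n + 1) (j + 1))) =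
      qq ^ (k + 1) * (G n k + G n (k + 1)) := by
  intro d
  induction d with
  | zero =>
    intro k hk
    rw [Finset.Ico_eq_empty (by omega), Finset.sum_empty]
    rw [G, if_neg (by omega), G, if_neg (by omega)]
    ring
  | succ d ih =>
    intro k hk
    rcases Nat.lt_or_ge k n with hlt | hge
    · rw [Finset.sum_eq_sum_Ico_succ_bot hlt]
      have hneg : ∀ j ∈ Finset.Ico (k + 1) n,
          (-1 : RatFunc ℚ) ^ (j - k) * ((qq⁻¹) ^ (j + 1) * G (n + 1) (j + 1)) =
            -((-1 : RatFunc ℚ) ^ (j - (k + 1)) * ((qq⁻¹) ^ (j + 1) * G (n + 1) (j + 1))) := by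
        intro j hj
        have hj' : k + 1 ≤ j := (Finset.mem_Ico.mp hj).1
        have : j - k = (j - (k + 1)) + 1 := by omega
        rw [this, pow_succ]
        ring
      rw [Finset.sum_congr rfl hneg, Finset.sum_neg_distrib, ih (k + 1) (by omega)]
      have hA : (qq⁻¹) ^ (k + 1) * qq ^ (2 * k + 2) = qq ^ (k + 1) :=
        rpow_mul_qpow _ _ _ (by omega)
      have hB : (qq⁻¹) ^ (k + 1) * qq ^ (2 * k + 3) = qq ^ (k + 2) :=
        rpow_mul_qpow _ _ _ (by omega)
      have hrec := REC n k
      simp only [Nat.sub_self, pow_zero, one_mul]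
      linear_combination (qq⁻¹) ^ (k + 1) * hrec + (G n k + G n (k + 1)) * hA +
        (G n (k + 1) + G n (k + 2)) * hB
    · rw [Finset.Ico_eq_empty (by omega), Finset.sum_empty]
      rw [G, if_neg (by omega), G, if_neg (by omega)]
      ring

lemma W_eq_left (n : ℕ) :
    En (n + 1) - (En (n + 1)).comp sig =
      (1 + Polynomial.C (qq - 1) * Polynomial.X) *
        ∑ k ∈ Finset.range n,
          Polynomial.C (qq ^ (k + 1) * (G n k + G n (k + 1))) * qbinom k := by
  rw [En, sum_comp', ← Finset.sum_sub_distrib]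
  have hterm : ∀ j, Polynomial.C (G (n + 1) j) * qbinom j -
      (Polynomial.C (G (n + 1) j) * qbinom j).comp sig =
      Polynomial.C (G (n + 1) j) * (qbinom j - (qbinom j).comp sig) := by
    intro j
    rw [Polynomial.mul_comp, Polynomial.C_comp]
    ring
  rw [Finset.sum_congr rfl (fun j _ => hterm j)]
  rw [Finset.sum_range_succ' (fun j => Polynomial.C (G (n + 1) j) * (qbinom j - (qbinom j).comp sig))]
  have h0 : qbinom 0 - (qbinom 0).comp sig = 0 := by
    rw [qbinom_zero, Polynomial.one_comp, sub_self]
  rw [h0, mul_zero, add_zero]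
  have hterm2 : ∀ i, Polynomial.C (G (n + 1) (i + 1)) * (qbinom (i + 1) - (qbinom (i + 1)).comp sig)
      = (1 + Polynomial.C (qq - 1) * Polynomial.X) *
          (Polynomial.C ((qq⁻¹) ^ (i + 1) * G (n + 1) (i + 1)) * Pp i) := by
    intro i
    rw [key_sub, Polynomial.C_mul]
    ring
  rw [Finset.sum_congr rfl (fun i _ => hterm2 i), ← Finset.mul_sum]
  congr 1
  rw [abel_sum n (fun i => (qq⁻¹) ^ (i + 1) * G (n + 1) (i + 1))]
  refine Finset.sum_congr rfl (fun k hk => ?_)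
  congr 1
  rw [Tk_eq n n k (by omega)]

lemma W_eq_right (n : ℕ) :
    Polynomial.C qq * (En (n + 1)).comp Ap =
      ∑ k ∈ Finset.range (n + 1),
        Polynomial.C (qq ^ (k + 1) * (G (n + 1) k + G (n + 1) (k + 1))) * qbinom k := by
  rw [En, sum_comp', Finset.mul_sum]
  have hterm : ∀ i, Polynomial.C qq * (Polynomial.C (G (n + 1) (i + 1)) * qbinom (i + 1)).comp Ap =
      Polynomial.C (qq ^ (i + 2) * G (n + 1) (i + 1)) * qbinom (i + 1) +
        Polynomial.C (qq ^ (i + 1) * G (n + 1) (i + 1)) * qbinom i := by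
    intro i
    rw [Polynomial.mul_comp, Polynomial.C_comp, qbinom_comp_Ap]
    simp only [Polynomial.C_mul, Polynomial.C_pow]
    ring
  rw [Finset.sum_range_succ'
    (fun j => Polynomial.C qq * (Polynomial.C (G (n + 1) j) * qbinom j).comp Ap)]
  rw [Finset.sum_congr rfl (fun i _ => hterm i)]
  have h0 : Polynomial.C qq * (Polynomial.C (G (n + 1) 0) * qbinom 0).comp Ap =
      Polynomial.C (qq * G (n + 1) 0) * qbinom 0 := by
    rw [qbinom_zero, Polynomial.mul_comp, Polynomial.C_comp, Polynomial.one_comp,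
      Polynomial.C_mul]
    ring
  rw [h0, Finset.sum_add_distrib]
  -- RHS split
  have hR : ∀ k, Polynomial.C (qq ^ (k + 1) * (G (n + 1) k + G (n + 1) (k + 1))) * qbinom k =
      Polynomial.C (qq ^ (k + 1) * G (n + 1) k) * qbinom k +
        Polynomial.C (qq ^ (k + 1) * G (n + 1) (k + 1)) * qbinom k := by
    intro k
    rw [mul_add, Polynomial.C_add]
    ring
  rw [Finset.sum_congr rfl (fun k _ => hR k), Finset.sum_add_distrib]
  rw [Finset.sum_range_succ' (fun k => Polynomial.C (qq ^ (k + 1) * G (n + 1) k) * qbinom k)]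
  rw [Finset.sum_range_succ (fun k => Polynomial.C (qq ^ (k + 1) * G (n + 1) (k + 1)) * qbinom k)]
  have hGtop : G (n + 1) (n + 1) = 0 := by rw [G, if_neg (by omega)]
  rw [hGtop, mul_zero, Polynomial.C_0, zero_mul, add_zero, pow_one]
  simp only [add_assoc, one_add_one_eq_two]
  ring

lemma KEY0 (n : ℕ) (hn : 1 ≤ n) :
    En (n + 1) - (En (n + 1)).comp sig =
      (1 + Polynomial.C (qq - 1) * Polynomial.X) * (Polynomial.C qq * (En n).comp Ap) := by
  obtain ⟨m, rfl⟩ : ∃ m, n = m + 1 := ⟨n - 1, by omega⟩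
  rw [W_eq_left (m + 1), W_eq_right m]

noncomputable def wfun (n j : ℕ) : RatFunc ℚ :=
  (-1 : RatFunc ℚ) ^ j * (qq * qint (j + 1) * G n (j + 1) + qint (j + 2) * G n j)

lemma KEY2 (n : ℕ) (hn : 1 ≤ n) : (En (n + 1)).eval bb = 0 := by
  rw [En, Polynomial.eval_finset_sum]
  simp only [Polynomial.eval_mul, Polynomial.eval_C, qbinom_eval_bb]
  rw [Finset.sum_range_succ'
    (fun j => G (n + 1) j * ((-1 : RatFunc ℚ) ^ j * (qq⁻¹) ^ (2 * j) * qint (j + 1)))]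
  have ht : ∀ i, G (n + 1) (i + 1) *
      ((-1 : RatFunc ℚ) ^ (i + 1) * (qq⁻¹) ^ (2 * (i + 1)) * qint (i + 1 + 1)) =
      wfun n (i + 1) - wfun n i := by
    intro i
    have hA : qq ^ (2 * i + 2) * (qq⁻¹) ^ (2 * (i + 1)) = 1 := by
      rw [inv_pow, show 2 * (i + 1) = 2 * i + 2 by ring,
        mul_inv_cancel₀ (pow_ne_zero _ hq0)]
    have hB : qq ^ (2 * i + 3) * (qq⁻¹) ^ (2 * (i + 1)) = qq := by
      rw [inv_pow, show 2 * i + 3 = 2 * i + 2 + 1 by ring, pow_succ,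
        show 2 * (i + 1) = 2 * i + 2 by ring, mul_comm (qq ^ (2 * i + 2)) qq, mul_assoc,
        mul_inv_cancel₀ (pow_ne_zero _ hq0), mul_one]
    have hz2 : qint (i + 1 + 1) = qq * qint (i + 1) + 1 := qint_succ (i + 1)
    have hz3 : qint (i + 1 + 2) = qq * qint (i + 1 + 1) + 1 := qint_succ (i + 1 + 1)
    have hz1 : qint (i + 2) = qq * qint (i + 1) + 1 := qint_succ (i + 1)
    have hGn : G n (i + 1 + 1) = G n (i + 2) := by norm_num
    rw [REC n i, wfun, wfun, hz3, hz2, hGn]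
    linear_combination ((G n i + G n (i + 1)) * ((-1 : RatFunc ℚ) ^ (i + 1) *
        (qq * qint (i + 1) + 1))) * hA +
      ((G n (i + 1) + G n (i + 2)) * ((-1 : RatFunc ℚ) ^ (i + 1) *
        (qq * qint (i + 1) + 1))) * hB
  rw [Finset.sum_congr rfl (fun i _ => ht i), Finset.sum_range_sub (wfun n)]
  have hwn : wfun n n = 0 := by
    rw [wfun, G, if_neg (by omega), G, if_neg (by omega)]
    ring
  have hw0 : wfun n 0 = qq * G n 1 + qint 2 * G n 0 := by
    rw [wfun, pow_zero, one_mul, qint_one, mul_one]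
  have hG0 : G (n + 1) 0 = gI (n + 1) 0 := by rw [G, if_pos (by omega)]
  rw [hwn, hw0, hG0, BD0 n hn]
  simp [qint_one]
  ring

lemma sig_comp_Ap : sig.comp Ap = Polynomial.X := by
  have h0 := hq0
  simp only [sig, Ap, Polynomial.sub_comp, Polynomial.mul_comp, Polynomial.C_comp,
    Polynomial.X_comp]
  rw [mul_add, ← mul_assoc, ← Polynomial.C_mul, inv_mul_cancel₀ h0]
  simp

lemma Ap_comp_sig : Ap.comp sig = Polynomial.X := by
  have h0 := hq0
  simp only [sig, Ap, Polynomial.add_comp, Polynomial.mul_comp, Polynomial.C_comp,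
    Polynomial.X_comp, Polynomial.one_comp]
  rw [mul_sub, ← mul_assoc, ← Polynomial.C_mul, mul_inv_cancel₀ h0]
  simp [← Polynomial.C_mul, mul_inv_cancel₀ h0]

lemma sig_eval : sig.eval (-qq⁻¹) = bb := by
  simp [sig, bb]
  ring

lemma En_one : En 1 = 1 := by
  rw [En]
  rw [Finset.sum_range_one, qbinom_zero, mul_one]
  have hG : G 1 0 = 1 := by
    rw [G, if_pos (by omega), gI]
    norm_num
    rw [Fh_one_zero]
    have hT : Tn 1 = 1 := rfl
    rw [hT, pow_one]
    field_simp
    exact div_self hq0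
  rw [hG, Polynomial.C_1]

lemma hscal : Polynomial.C qq * (1 + Polynomial.C (qq - 1) * sig) =
    1 + Polynomial.C (qq - 1) * Polynomial.X := by
  have h0 := hq0
  have hCC2 : Polynomial.C qq * (Polynomial.C (qq - 1) * Polynomial.C qq⁻¹) =
      Polynomial.C (qq - 1) := by
    rw [← Polynomial.C_mul, ← Polynomial.C_mul]
    congr 1
    field_simp
  simp only [sig] at *
  simp only [Polynomial.C_sub, Polynomial.C_1] at hCC2 ⊢
  linear_combination (Polynomial.X - 1) * hCC2

theorem statement11' (Cs : ℕ → Polynomial (RatFunc ℚ))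
    (h1 : Cs 1 = 1)
    (h2 : ∀ n, 2 ≤ n → (Cs n).eval (-qq⁻¹) = 0)
    (h3 : ∀ n, 1 ≤ n →
      Cs (n + 1) -
          (Cs (n + 1)).comp (Polynomial.C qq⁻¹ * Polynomial.X - Polynomial.C qq⁻¹) =
        (1 + Polynomial.C (qq - 1) * Polynomial.X) *
          (Cs n).comp (Polynomial.C qq * Polynomial.X + 1))
    (n : ℕ) (hn : 1 ≤ n) :
    (Cs n).comp (Polynomial.C qq * Polynomial.X + 1) =
      ∑ j ∈ Finset.range n,
        Polynomial.C (Polynomial.aeval qq⁻¹ (fq (n + j) (n - 1 - j)) *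
          qq ^ (j * n + n * (n + 1) / 2 - (j + 1) * (j + 2) / 2)) * qbinom j := by
  have key : ∀ m, 1 ≤ m → (Cs m).comp Ap = En m := by
    intro m hm
    induction m with
    | zero => omega
    | succ m ih =>
      rcases Nat.eq_zero_or_pos m with rfl | hm1
      · rw [h1, En_one, Polynomial.one_comp]
      · have ihm := ih hm1
        have h3'' : Cs (m + 1) - (Cs (m + 1)).comp sig
            = (1 + Polynomial.C (qq - 1) * Polynomial.X) * En m := by
          have h3' := h3 m hm1
          rw [show sig = Polynomial.C qq⁻¹ * Polynomial.X - Polynomial.C qq⁻¹ from rfl, h3',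
            show (Polynomial.C qq * Polynomial.X + 1 : Polynomial (RatFunc ℚ)) = Ap from rfl,
            ihm]
        have hK : (En (m + 1)).comp sig - ((En (m + 1)).comp sig).comp sig
            = (1 + Polynomial.C (qq - 1) * Polynomial.X) * En m := by
          rw [← Polynomial.sub_comp, KEY0 m hm1, Polynomial.mul_comp, Polynomial.mul_comp,
            Polynomial.add_comp, Polynomial.one_comp, Polynomial.mul_comp, Polynomial.C_comp,
            Polynomial.C_comp, Polynomial.X_comp, Polynomial.comp_assoc, Ap_comp_sig,
            Polynomial.comp_X, ← mul_assoc,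
            mul_comm (1 + Polynomial.C (qq - 1) * sig) (Polynomial.C qq), hscal]
        have hzero : (Cs (m + 1) - (En (m + 1)).comp sig) -
            (Cs (m + 1) - (En (m + 1)).comp sig).comp sig = 0 := by
          rw [Polynomial.sub_comp]
          linear_combination h3'' - hK
        have hDc := const_of_comp (Cs (m + 1) - (En (m + 1)).comp sig)
          (sub_eq_zero.mp hzero).symm
        have hev : (Cs (m + 1) - (En (m + 1)).comp sig).eval (-qq⁻¹) = 0 := by
          rw [Polynomial.eval_sub, h2 (m + 1) (by omega), Polynomial.eval_comp, sig_eval,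
            KEY2 m hm1]
          ring
        have hD0 : Cs (m + 1) - (En (m + 1)).comp sig = 0 := by
          rw [hDc] at hev ⊢
          rw [Polynomial.eval_C] at hev
          rw [hev, Polynomial.C_0]
        rw [sub_eq_zero] at hD0
        rw [hD0, Polynomial.comp_assoc, sig_comp_Ap, Polynomial.comp_X]
  rw [show (Polynomial.C qq * Polynomial.X + 1 : Polynomial (RatFunc ℚ)) = Ap from rfl,
    key n hn, En]
  refine Finset.sum_congr rfl (fun j hj => ?_)
  rw [coeff_eq n j (Finset.mem_range.mp hj)]

/-- For all `n ≥ 1`: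
`C_n(qx+1|q) = Σ_{j=0}^{n-1} f(n+j, n-1-j|q⁻¹) q^{jn + n(n+1)/2 - (j+1)(j+2)/2} (x choose j)_q`. -/
theorem statement11 (Cs : ℕ → Polynomial (RatFunc ℚ))
    (h1 : Cs 1 = 1)
    (h2 : ∀ n, 2 ≤ n → (Cs n).eval (-qq⁻¹) = 0)
    (h3 : ∀ n, 1 ≤ n →
      Cs (n + 1) -
          (Cs (n + 1)).comp (Polynomial.C qq⁻¹ * Polynomial.X - Polynomial.C qq⁻¹) =
        (1 + Polynomial.C (qq - 1) * Polynomial.X) *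
          (Cs n).comp (Polynomial.C qq * Polynomial.X + 1))
    (n : ℕ) (hn : 1 ≤ n) :
    (Cs n).comp (Polynomial.C qq * Polynomial.X + 1) =
      ∑ j ∈ Finset.range n,
        Polynomial.C (Polynomial.aeval qq⁻¹ (fq (n + j) (n - 1 - j)) *
          qq ^ (j * n + n * (n + 1) / 2 - (j + 1) * (j + 2) / 2)) * qbinom j := by
  exact statement11' Cs h1 h2 h3 n hn
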